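/- Let F be a field, A a nontrivial finite-dimensional simple F-algebra, and a a nonzero element of A such that the left ideal A·a is a proper left ideal (A·a ≠ A). Then the left ideal A·a contains a nonzero idempotent e with e ≠ 1 (equivalently, A contains a nontrivial idempotent lying in A·a). -/

import Mathlib

/-- Right multiplication by `r` as an `A`-linear endomorphism of `A`. -/
private def rmul (A : Type*) [Ring A] (r : A) : A →ₗ[A] A where
  toFun x := x * r
  map_add' x y := add_mul x y r
  map_smul' c x := by simp [smul_eq_mul, mul_assoc]

/-- A finite-dimensional simple algebra over a field is a semisimple ring. -/
private theorem aux_isSemisimpleRing (F A : Type*) [Field F] [Ring A] [Algebra F A]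
    [FiniteDimensional F A] [Nontrivial A] [IsSimpleRing A] : IsSemisimpleRing A := by
  have hart : IsArtinian A A := by
    have : IsArtinianRing A := isArtinian_of_tower F inferInstance
    exact this
  have hatomic : IsAtomic (Submodule A A) :=
    isAtomic_of_orderBot_wellFounded_lt (wellFounded_lt (α := Submodule A A))
  set T : Set (Submodule A A) := {m | IsSimpleModule A m} with hT
  -- the sSup of all simple submodules is stable under right multiplication
  have hmap : ∀ (r : A) (m : Submodule A A), m ∈ T → m.map (rmul A r) ≤ sSup T := by
    intro r m hm
    rcases eq_or_ne (m.map (rmul A r)) ⊥ with h | h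
    · simp [h]
    · refine le_sSup ?_
      have : IsSimpleModule A (m.map (rmul A r)) := by
        have hm' : IsSimpleModule A m := hm
        set g : m →ₗ[A] A := (rmul A r).comp m.subtype with hg
        have hrange : LinearMap.range g = m.map (rmul A r) := by
          rw [hg, LinearMap.range_comp, Submodule.range_subtype]
        have hker : LinearMap.ker g = ⊥ := by
          rcases hm'.1.2 (LinearMap.ker g) with h' | h'
          · exact h'
          · exfalso
            apply h
            rw [← hrange]
            rw [LinearMap.range_eq_bot]
            ext x
            have : x ∈ LinearMap.ker g := h' ▸ Submodule.mem_top
            simpa using this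
        have e : m ≃ₗ[A] LinearMap.range g :=
          LinearEquiv.ofInjective g (LinearMap.ker_eq_bot.mp hker)
        rw [← hrange]
        exact (IsSimpleModule.congr e.symm)
      exact this
  have hstable : ∀ x ∈ sSup T, ∀ r : A, x * r ∈ sSup T := by
    intro x hx r
    have : (sSup T).map (rmul A r) ≤ sSup T := by
      rw [(Submodule.gc_map_comap (rmul A r)).l_sSup]
      exact iSup₂_le fun m hm => hmap r m hm
    exact this ⟨x, hx, rfl⟩
  -- form the two-sided ideal
  let I : TwoSidedIdeal A := TwoSidedIdeal.mk' (sSup T : Submodule A A)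
    (Submodule.zero_mem _) (fun hx hy => Submodule.add_mem _ hx hy)
    (fun hx => Submodule.neg_mem _ hx)
    (fun {x y} hy => Submodule.smul_mem _ x hy)
    (fun {x y} hx => hstable x hx y)
  -- sSup T ≠ ⊥ since there is an atom
  obtain ⟨m, hm⟩ := IsAtomic.exists_atom (Submodule A A)
  obtain ⟨x, hxm, hx0⟩ := SetLike.exists_of_lt (bot_lt_iff_ne_bot.mpr hm.1)
  have hxS : x ∈ sSup T := le_sSup (show m ∈ T from isSimpleModule_iff_isAtom.mpr hm) hxm
  have h1 : (1 : A) ∈ I :=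
    IsSimpleRing.one_mem_of_ne_zero_mem I (by simpa using hx0)
      ((TwoSidedIdeal.mem_mk' _ _ _ _ _ _ x).mpr hxS)
  have htop : sSup T = ⊤ := by
    rw [Submodule.eq_top_iff']
    intro y
    have h1' : (1 : A) ∈ sSup T := (TwoSidedIdeal.mem_mk' _ _ _ _ _ _ 1).mp h1
    simpa using Submodule.smul_mem (sSup T) y h1'
  exact IsSemisimpleModule.of_sSup_simples_eq_top htop

/-- If `A` is a nontrivial finite-dimensional simple `F`-algebra and `a ∈ A` is a
nonzero element generating a proper left ideal `A·a`, then the left ideal `A·a`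
contains a nontrivial idempotent. -/
theorem exists_nontrivial_idempotent_in_proper_left_ideal
    (F A : Type*) [Field F] [Ring A] [Algebra F A] [FiniteDimensional F A]
    [Nontrivial A] [IsSimpleRing A]
    (a : A) (ha : a ≠ 0) (hproper : Ideal.span {a} ≠ (⊤ : Ideal A)) :
    ∃ e ∈ Ideal.span {a}, e * e = e ∧ e ≠ 0 ∧ e ≠ 1 := by
  have := aux_isSemisimpleRing F A
  obtain ⟨e, he, hspan⟩ := IsSemisimpleRing.ideal_eq_span_idempotent (Ideal.span {a})
  refine ⟨e, ?_, he, ?_, ?_⟩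
  · rw [hspan]; exact Ideal.subset_span rfl
  · rintro rfl
    have : a ∈ Ideal.span ({(0 : A)} : Set A) := hspan ▸ Ideal.subset_span rfl
    rw [show Ideal.span ({(0:A)} : Set A) = ⊥ from Submodule.span_zero_singleton A,
      Submodule.mem_bot] at this
    exact ha this
  · rintro rfl
    apply hproper
    rw [hspan, Ideal.span_singleton_one]
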